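/- If a Banach space X has the almost Daugavet property, then every convex combination of weak-star slices of the closed unit ball of X* has diameter 2. -/

import Mathlib

open scoped BigOperators
open Metric

noncomputable section

/-- `X` has the Daugavet property with respect to the subspace `Y` of `X*`:
`‖I + T‖ = 1 + ‖T‖` for every rank-one operator `T = x ⊗ g` with `g ∈ Y`. -/
def DaugavetWrt (X : Type*) [NormedAddCommGroup X] [NormedSpace ℝ X]
    (Y : Subspace ℝ (StrongDual ℝ X)) : Prop :=
  ∀ x : X, ∀ g ∈ Y,
    ‖ContinuousLinearMap.id ℝ X + g.smulRight x‖ = 1 + ‖g.smulRight x‖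

/-- `Y ⊆ X*` is a norming subspace. -/
def IsNorming (X : Type*) [NormedAddCommGroup X] [NormedSpace ℝ X]
    (Y : Subspace ℝ (StrongDual ℝ X)) : Prop :=
  ∀ x : X, ‖x‖ = sSup {r : ℝ | ∃ g ∈ Y, ‖g‖ ≤ 1 ∧ r = |g x|}

/-- `X` has the almost Daugavet property. -/
def AlmostDaugavet (X : Type*) [NormedAddCommGroup X] [NormedSpace ℝ X] : Prop :=
  ∃ Y : Subspace ℝ (StrongDual ℝ X), IsNorming X Y ∧ DaugavetWrt X Y

/-- The weak-star slice of the dual unit ball determined by `x` and `α`. -/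
def wSlice {X : Type*} [NormedAddCommGroup X] [NormedSpace ℝ X] (x : X) (α : ℝ) :
    Set (StrongDual ℝ X) :=
  {f | ‖f‖ ≤ 1 ∧ 1 - α < f x}

/-- The convex combination `∑ lam i • S i` of sets. -/
def ccomb {E : Type*} [AddCommMonoid E] [Module ℝ E] {n : ℕ}
    (lam : Fin n → ℝ) (S : Fin n → Set E) : Set E :=
  {y | ∃ f : Fin n → E, (∀ i, f i ∈ S i) ∧ y = ∑ i, lam i • f i}

section Aux

variable {X : Type*} [NormedAddCommGroup X] [NormedSpace ℝ X]
variable {Y : Subspace ℝ (StrongDual ℝ X)}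

/-- bound for a functional of norm ≤ 1 at a point of norm ≤ 1 -/
lemma dual_apply_le {f : StrongDual ℝ X} {z : X} (hf : ‖f‖ ≤ 1) (hz : ‖z‖ ≤ 1) :
    f z ≤ 1 := by
  have h1 : f z ≤ |f z| := le_abs_self _
  have h2 : |f z| ≤ ‖f‖ * ‖z‖ := f.le_opNorm z
  nlinarith [norm_nonneg f, norm_nonneg z]

lemma dual_apply_ge {f : StrongDual ℝ X} {z : X} (hf : ‖f‖ ≤ 1) (hz : ‖z‖ ≤ 1) :
    -1 ≤ f z := by
  have := dual_apply_le hf (z := -z) (by simpa using hz)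
  simp only [map_neg] at this
  linarith

/-- From the norming property: near-norming functionals in Y. -/
lemma norming_exists (hY : IsNorming X Y) (w : X) {δ : ℝ} (hδ : 0 < δ) :
    ∃ h ∈ Y, ‖h‖ ≤ 1 ∧ ‖w‖ - δ < h w := by
  have hs := hY w
  have hne : ({r : ℝ | ∃ g ∈ Y, ‖g‖ ≤ 1 ∧ r = |g w|}).Nonempty :=
    ⟨0, 0, Y.zero_mem, by simp⟩
  have hlt : ‖w‖ - δ < sSup {r : ℝ | ∃ g ∈ Y, ‖g‖ ≤ 1 ∧ r = |g w|} := by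
    rw [← hs]; linarith
  obtain ⟨r, ⟨g, hgY, hg1, hr⟩, hrlt⟩ := exists_lt_of_lt_csSup hne hlt
  subst hr
  rcases le_or_gt 0 (g w) with h0 | h0
  · exact ⟨g, hgY, hg1, by rwa [abs_of_nonneg h0] at hrlt⟩
  · refine ⟨-g, Y.neg_mem hgY, by simpa using hg1, ?_⟩
    rw [abs_of_neg h0] at hrlt
    simpa using hrlt

lemma norming_exists_unit (hY : IsNorming X Y) {w : X} (hw : ‖w‖ = 1)
    {δ : ℝ} (hδ : 0 < δ) (hδ1 : δ < 1) :
    ∃ g ∈ Y, ‖g‖ = 1 ∧ 1 - δ < g w := by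
  obtain ⟨h, hhY, hh1, hhw⟩ := norming_exists hY w hδ
  rw [hw] at hhw
  have hpos : 0 < h w := by linarith
  have hn0 : 0 < ‖h‖ := by
    have h2 := h.le_opNorm w
    rw [hw, mul_one, Real.norm_eq_abs] at h2
    have := (le_abs_self (h w)).trans h2
    linarith
  refine ⟨(‖h‖⁻¹ : ℝ) • h, Y.smul_mem _ hhY, ?_, ?_⟩
  · rw [norm_smul, Real.norm_eq_abs, abs_of_pos (inv_pos.mpr hn0), inv_mul_cancel₀ (ne_of_gt hn0)]
  · have happ : ((‖h‖⁻¹ : ℝ) • h) w = ‖h‖⁻¹ * h w := rfl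
    rw [happ]
    have h1 : h w ≤ ‖h‖⁻¹ * h w := by
      have : (1:ℝ) ≤ ‖h‖⁻¹ := (one_le_inv₀ hn0).mpr hh1
      nlinarith
    linarith

/-- Key consequence of the Daugavet equation for `g ⊗ u`. -/
lemma daugavet_step (hDW : DaugavetWrt X Y) {u : X} (hu : ‖u‖ = 1)
    {g : StrongDual ℝ X} (hgY : g ∈ Y) (hg : ‖g‖ = 1)
    {δ : ℝ} (hδ : 0 < δ) :
    ∃ z : X, ‖z‖ ≤ 1 ∧ 1 - δ < g z ∧ 2 - δ < ‖u + z‖ := by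
  have hT : ‖g.smulRight u‖ = 1 := by
    rw [ContinuousLinearMap.norm_smulRight_apply, hg, hu, mul_one]
  have hop : ‖ContinuousLinearMap.id ℝ X + g.smulRight u‖ = 2 := by
    rw [hDW u g hgY, hT]; norm_num
  have hlt : (2 - δ/2 : ℝ) < ‖ContinuousLinearMap.id ℝ X + g.smulRight u‖ := by
    rw [hop]; linarith
  obtain ⟨z₀, hz₀1, hz₀n⟩ :=
    (ContinuousLinearMap.id ℝ X + g.smulRight u).exists_lt_apply_of_lt_opNorm hlt
  have happ : (ContinuousLinearMap.id ℝ X + g.smulRight u) z₀ = z₀ + g z₀ • u := by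
    simp [ContinuousLinearMap.add_apply, ContinuousLinearMap.smulRight_apply]
  rw [happ] at hz₀n
  -- |g z₀| is large
  have habs : 1 - δ/2 < |g z₀| := by
    have h1 : ‖z₀ + g z₀ • u‖ ≤ ‖z₀‖ + |g z₀| := by
      have := norm_add_le z₀ (g z₀ • u)
      rw [norm_smul, Real.norm_eq_abs, hu, mul_one] at this
      exact this
    linarith
  -- choose the sign
  obtain ⟨z, hz1, hgz, hzn⟩ : ∃ z : X, ‖z‖ ≤ 1 ∧ g z = |g z₀| ∧
      ‖z + g z • u‖ = ‖z₀ + g z₀ • u‖ := by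
    rcases le_or_gt 0 (g z₀) with h0 | h0
    · exact ⟨z₀, le_of_lt hz₀1, (abs_of_nonneg h0).symm, rfl⟩
    · refine ⟨-z₀, by simpa using le_of_lt hz₀1, by simp [abs_of_neg h0], ?_⟩
      have : -z₀ + g (-z₀) • u = -(z₀ + g z₀ • u) := by
        simp [map_neg, neg_smul]; abel
      rw [this, norm_neg]
  rw [← hzn] at hz₀n
  have hgz1 : g z ≤ 1 := dual_apply_le (le_of_eq hg) hz1
  have hgz' : 1 - δ/2 < g z := by rw [hgz]; exact habs
  refine ⟨z, hz1, by linarith, ?_⟩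
  have hdecomp : u + z = (z + g z • u) + (1 - g z) • u := by
    rw [sub_smul, one_smul]; abel
  have h2 : ‖u + z‖ ≥ ‖z + g z • u‖ - ‖(1 - g z) • u‖ := by
    rw [hdecomp]
    have h4 : ‖z + g z • u‖ ≤ ‖z + g z • u + (1 - g z) • u‖ + ‖(1 - g z) • u‖ := by
      have h5 := norm_add_le (z + g z • u + (1 - g z) • u) (-((1 - g z) • u))
      simpa using h5
    linarith
  have h3 : ‖(1 - g z) • u‖ = 1 - g z := by
    rw [norm_smul, Real.norm_eq_abs, hu, mul_one, abs_of_nonneg (by linarith)]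
  linarith

/-- Sub-slice refinement: inside the slice of `B_X` given by `g, β` there is a smaller
slice (given by a functional from `Y`) on which, additionally, `‖u + z‖ > 2 - ε`. -/
lemma subslice (hY : IsNorming X Y) (hDW : DaugavetWrt X Y)
    {g : StrongDual ℝ X} (hgY : g ∈ Y) (hg : ‖g‖ = 1)
    {β : ℝ} (hβ : 0 < β) {u : X} (hu : ‖u‖ = 1) {ε : ℝ} (hε : 0 < ε) :
    ∃ g' ∈ Y, ∃ β' : ℝ, ‖g'‖ = 1 ∧ 0 < β' ∧
      (∃ z, ‖z‖ ≤ 1 ∧ 1 - β' < g' z) ∧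
      (∀ z, ‖z‖ ≤ 1 → 1 - β' < g' z → 1 - β < g z ∧ 2 - ε < ‖u + z‖) := by
  set δ : ℝ := min (min β ε) 1 / 6 with hδdef
  have hδ0 : 0 < δ := by
    apply div_pos _ (by norm_num)
    exact lt_min (lt_min hβ hε) one_pos
  have hδβ : 6 * δ ≤ β := by
    have : min (min β ε) 1 ≤ β := le_trans (min_le_left _ _) (min_le_left _ _)
    rw [hδdef]; linarith
  have hδε : 6 * δ ≤ ε := by
    have : min (min β ε) 1 ≤ ε := le_trans (min_le_left _ _) (min_le_right _ _)
    rw [hδdef]; linarith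
  have hδ1 : 6 * δ ≤ 1 := by
    have : min (min β ε) 1 ≤ 1 := min_le_right _ _
    rw [hδdef]; linarith
  obtain ⟨z₀, hz₀1, hz₀g, hz₀u⟩ := daugavet_step hDW hu hgY hg hδ0
  obtain ⟨h, hhY, hh1, hhw⟩ := norming_exists hY (u + z₀) hδ0
  have hw2 : 2 - 2*δ < h (u + z₀) := by linarith
  rw [map_add] at hw2
  have hhu1 : h u ≤ 1 := dual_apply_le hh1 (le_of_eq hu)
  have hhz₀1 : h z₀ ≤ 1 := dual_apply_le hh1 hz₀1
  have hhz₀ : 1 - 2*δ < h z₀ := by linarith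
  have hhu : 1 - 2*δ < h u := by linarith
  set G : StrongDual ℝ X := g + h with hGdef
  have hGY : G ∈ Y := Y.add_mem hgY hhY
  have hGz₀ : 2 - 3*δ < G z₀ := by
    have : G z₀ = g z₀ + h z₀ := rfl
    rw [this]; linarith
  have hGz₀' : G z₀ ≤ ‖G‖ := by
    have h2 := G.le_opNorm z₀
    rw [Real.norm_eq_abs] at h2
    have h3 : |G z₀| ≤ ‖G‖ := le_trans h2 (by nlinarith [norm_nonneg G])
    exact le_trans (le_abs_self _) h3
  have hGpos : 0 < ‖G‖ := by linarith
  set c : ℝ := G z₀ - δ with hcdef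
  have hc2 : 2 - 4*δ < c := by rw [hcdef]; linarith
  have hcG : c < ‖G‖ := by rw [hcdef]; linarith
  have hc0 : 0 < c := by linarith
  refine ⟨(‖G‖⁻¹ : ℝ) • G, Y.smul_mem _ hGY, 1 - c / ‖G‖, ?_, ?_, ?_, ?_⟩
  · rw [norm_smul, Real.norm_eq_abs, abs_of_pos (inv_pos.mpr hGpos),
      inv_mul_cancel₀ (ne_of_gt hGpos)]
  · have : c / ‖G‖ < 1 := (div_lt_one hGpos).mpr hcG
    linarith
  · refine ⟨z₀, hz₀1, ?_⟩
    have happ : ((‖G‖⁻¹ : ℝ) • G) z₀ = G z₀ / ‖G‖ := by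
      rw [div_eq_inv_mul]; rfl
    rw [happ]
    have h1 : 1 - (1 - c / ‖G‖) = c / ‖G‖ := by ring
    rw [h1]
    have hlt : c < G z₀ := by rw [hcdef]; linarith
    exact div_lt_div_of_pos_right hlt hGpos
  · intro z hz1 hzd
    have happ : ((‖G‖⁻¹ : ℝ) • G) z = G z / ‖G‖ := by
      rw [div_eq_inv_mul]; rfl
    rw [happ] at hzd
    have h1 : 1 - (1 - c / ‖G‖) = c / ‖G‖ := by ring
    rw [h1] at hzd
    have hGz : c < G z := by
      have h2 : c / ‖G‖ * ‖G‖ < G z / ‖G‖ * ‖G‖ :=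
        mul_lt_mul_of_pos_right hzd hGpos
      rw [div_mul_cancel₀ _ (ne_of_gt hGpos), div_mul_cancel₀ _ (ne_of_gt hGpos)] at h2
      exact h2
    have hGzval : G z = g z + h z := rfl
    have hgz1 : g z ≤ 1 := dual_apply_le (le_of_eq hg) hz1
    have hhz1 : h z ≤ 1 := dual_apply_le hh1 hz1
    have hgz : 1 - 4*δ < g z := by rw [hGzval] at hGz; linarith
    have hhz : 1 - 4*δ < h z := by rw [hGzval] at hGz; linarith
    constructor
    · linarith
    · have h5 : h (u + z) ≤ ‖u + z‖ := by
        have h6 := h.le_opNorm (u + z)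
        rw [Real.norm_eq_abs] at h6
        have h7 : ‖h‖ * ‖u + z‖ ≤ ‖u + z‖ :=
          mul_le_of_le_one_left (norm_nonneg _) hh1
        have h8 : h (u + z) ≤ ‖h‖ * ‖u + z‖ := le_trans (le_abs_self _) h6
        linarith
      rw [map_add] at h5
      linarith

/-- Iterated sub-slice refinement over a finite list of unit vectors. -/
lemma multi_subslice (hY : IsNorming X Y) (hDW : DaugavetWrt X Y)
    {ε : ℝ} (hε : 0 < ε) :
    ∀ L : List X, (∀ u ∈ L, ‖u‖ = 1) →
    ∀ g : StrongDual ℝ X, g ∈ Y → ‖g‖ = 1 → ∀ β : ℝ, 0 < β →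
    ∃ g' ∈ Y, ∃ β' : ℝ, ‖g'‖ = 1 ∧ 0 < β' ∧
      (∃ z, ‖z‖ ≤ 1 ∧ 1 - β' < g' z) ∧
      (∀ z, ‖z‖ ≤ 1 → 1 - β' < g' z →
        1 - β < g z ∧ ∀ u ∈ L, 2 - ε < ‖u + z‖) := by
  intro L
  induction L with
  | nil =>
    intro _ g hgY hg β hβ
    refine ⟨g, hgY, β, hg, hβ, ?_, fun z _ hz => ⟨hz, by simp⟩⟩
    have hlt : max (1 - β) 0 < ‖g‖ := by
      rw [hg]
      rcases le_or_gt β 1 with h | h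
      · rw [max_eq_left (by linarith)]; linarith
      · rw [max_eq_right (by linarith)]; norm_num
    obtain ⟨z₀, hz₀1, hz₀⟩ := g.exists_lt_apply_of_lt_opNorm hlt
    rw [Real.norm_eq_abs] at hz₀
    rcases le_or_gt 0 (g z₀) with h0 | h0
    · refine ⟨z₀, le_of_lt hz₀1, ?_⟩
      rw [abs_of_nonneg h0] at hz₀
      exact lt_of_le_of_lt (le_max_left _ _) hz₀
    · refine ⟨-z₀, by simpa using le_of_lt hz₀1, ?_⟩
      rw [abs_of_neg h0] at hz₀
      rw [map_neg]
      exact lt_of_le_of_lt (le_max_left _ _) hz₀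
  | cons u L ih =>
    intro hL g hgY hg β hβ
    have hu : ‖u‖ = 1 := hL u List.mem_cons_self
    obtain ⟨g₁, hg₁Y, β₁, hg₁, hβ₁, _, hprop₁⟩ :=
      subslice hY hDW hgY hg hβ hu hε
    obtain ⟨g', hg'Y, β', hg', hβ', hne', hprop'⟩ :=
      ih (fun v hv => hL v (List.mem_cons_of_mem u hv)) g₁ hg₁Y hg₁ β₁ hβ₁
    refine ⟨g', hg'Y, β', hg', hβ', hne', ?_⟩
    intro z hz1 hzd
    obtain ⟨hzβ₁, hzL⟩ := hprop' z hz1 hzd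
    obtain ⟨hzβ, hzu⟩ := hprop₁ z hz1 hzβ₁
    refine ⟨hzβ, ?_⟩
    intro v hv
    rcases List.mem_cons.mp hv with h | h
    · subst h; exact hzu
    · exact hzL v h

end Aux

theorem almostDaugavet_implies_ccomb_wSlices_diam_two
    (X : Type*) [NormedAddCommGroup X] [NormedSpace ℝ X] [CompleteSpace X]
    (hD : AlmostDaugavet X)
    (n : ℕ) (lam : Fin n → ℝ) (hlam : ∀ i, 0 < lam i) (hsum : ∑ i, lam i = 1)
    (x : Fin n → X) (hx : ∀ i, ‖x i‖ = 1)
    (α : Fin n → ℝ) (hα : ∀ i, α i ∈ Set.Ioo (0 : ℝ) 1) :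
    Metric.diam (ccomb lam (fun i => wSlice (x i) (α i))) = 2 := by
  classical
  obtain ⟨Y, hY, hDW⟩ := hD
  have hn0 : n ≠ 0 := by
    rintro rfl
    simp at hsum
  haveI : Nonempty (Fin n) := ⟨⟨0, Nat.pos_of_ne_zero hn0⟩⟩
  have hnorm1 : ∀ p ∈ ccomb lam (fun i => wSlice (x i) (α i)), ‖p‖ ≤ 1 := by
    rintro p ⟨f, hf, rfl⟩
    calc ‖∑ i, lam i • f i‖ ≤ ∑ i, ‖lam i • f i‖ := norm_sum_le _ _
      _ ≤ ∑ i, lam i := Finset.sum_le_sum (fun i _ => by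
          rw [norm_smul, Real.norm_eq_abs, abs_of_pos (hlam i)]
          exact mul_le_of_le_one_right (le_of_lt (hlam i)) (hf i).1)
      _ = 1 := hsum
  have hbdd : Bornology.IsBounded (ccomb lam (fun i => wSlice (x i) (α i))) := by
    apply Bornology.IsBounded.subset
      (Metric.isBounded_closedBall (x := (0 : StrongDual ℝ X)) (r := 1))
    intro p hp
    rw [Metric.mem_closedBall, dist_zero_right]
    exact hnorm1 p hp
  refine le_antisymm ?_ ?_
  · apply Metric.diam_le_of_forall_dist_le (by norm_num)
    intro p hp q hq
    rw [dist_eq_norm]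
    have h1 := hnorm1 p hp
    have h2 := hnorm1 q hq
    calc ‖p - q‖ ≤ ‖p‖ + ‖q‖ := norm_sub_le _ _
      _ ≤ 2 := by linarith
  · apply le_of_forall_pos_le_add
    intro ε hε
    set A := Finset.univ.inf' Finset.univ_nonempty α with hA
    have hA0 : 0 < A := (Finset.lt_inf'_iff _).mpr (fun i _ => (hα i).1)
    have hAle : ∀ i, A ≤ α i := fun i => Finset.inf'_le α (Finset.mem_univ i)
    have hA1 : A < 1 :=
      lt_of_le_of_lt (hAle ⟨0, Nat.pos_of_ne_zero hn0⟩) (hα _).2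
    set δ := min A (ε/2) with hδdef
    have hδ0 : 0 < δ := lt_min hA0 (by linarith)
    have hδA : ∀ i, δ ≤ α i := fun i => le_trans (min_le_left _ _) (hAle i)
    have hδε : 2*δ ≤ ε := by
      have := min_le_right A (ε/2)
      rw [hδdef]; linarith
    -- initial functional from the norming subspace
    obtain ⟨g₀, hg₀Y, hg₀, -⟩ :=
      norming_exists_unit hY (hx ⟨0, Nat.pos_of_ne_zero hn0⟩)
        (by norm_num : (0:ℝ) < 1/2) (by norm_num)
    -- the list of vectors ±x i
    set L : List X := List.ofFn x ++ List.ofFn (fun i => -x i) with hL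
    have hLu : ∀ u ∈ L, ‖u‖ = 1 := by
      intro u hu
      rcases List.mem_append.mp hu with h | h
      · obtain ⟨i, rfl⟩ := List.mem_ofFn.mp h
        exact hx i
      · obtain ⟨i, rfl⟩ := List.mem_ofFn.mp h
        simp [hx i]
    obtain ⟨g', hg'Y, β', hg', hβ', ⟨z, hz1, hzd⟩, hprop⟩ :=
      multi_subslice hY hDW hδ0 L hLu g₀ hg₀Y hg₀ (1/2) (by norm_num)
    obtain ⟨-, hzL⟩ := hprop z hz1 hzd
    have hplus : ∀ i, 2 - δ < ‖x i + z‖ := fun i =>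
      hzL (x i) (List.mem_append.mpr (Or.inl (List.mem_ofFn.mpr ⟨i, rfl⟩)))
    have hminus : ∀ i, 2 - δ < ‖x i - z‖ := by
      intro i
      have h1 := hzL (-x i)
        (List.mem_append.mpr (Or.inr (List.mem_ofFn.mpr ⟨i, rfl⟩)))
      have h2 : -x i + z = -(x i - z) := by abel
      rwa [h2, norm_neg] at h1
    have hδlt2 : δ < 2 := by
      have := hδA ⟨0, Nat.pos_of_ne_zero hn0⟩
      have := (hα ⟨0, Nat.pos_of_ne_zero hn0⟩).2
      linarith
    have hplus0 : ∀ i, x i + z ≠ 0 := by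
      intro i h
      have := hplus i
      rw [h, norm_zero] at this
      linarith
    have hminus0 : ∀ i, x i - z ≠ 0 := by
      intro i h
      have := hminus i
      rw [h, norm_zero] at this
      linarith
    choose h hh1 hh2 using fun i => exists_dual_vector ℝ (x i + z) (norm_ne_zero_iff.mpr (hplus0 i))
    choose k hk1 hk2 using fun i => exists_dual_vector ℝ (x i - z) (norm_ne_zero_iff.mpr (hminus0 i))
    have hh2' : ∀ i, (h i) (x i + z) = ‖x i + z‖ := fun i => by
      have := hh2 i; exact_mod_cast this
    have hk2' : ∀ i, (k i) (x i - z) = ‖x i - z‖ := fun i => by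
      have := hk2 i; exact_mod_cast this
    -- estimates
    have hhx1 : ∀ i, (h i) (x i) ≤ 1 := fun i =>
      dual_apply_le (le_of_eq (hh1 i)) (le_of_eq (hx i))
    have hhz1 : ∀ i, (h i) z ≤ 1 := fun i => dual_apply_le (le_of_eq (hh1 i)) hz1
    have hkx1 : ∀ i, (k i) (x i) ≤ 1 := fun i =>
      dual_apply_le (le_of_eq (hk1 i)) (le_of_eq (hx i))
    have hkz1 : ∀ i, -1 ≤ (k i) z := fun i => dual_apply_ge (le_of_eq (hk1 i)) hz1
    have hiz : ∀ i, 1 - δ < (h i) z := by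
      intro i
      have h1 := hh2' i
      rw [map_add] at h1
      have := hplus i
      have := hhx1 i
      linarith
    have hix : ∀ i, 1 - δ < (h i) (x i) := by
      intro i
      have h1 := hh2' i
      rw [map_add] at h1
      have := hplus i
      have := hhz1 i
      linarith
    have hkz : ∀ i, (k i) z < -(1 - δ) := by
      intro i
      have h1 := hk2' i
      rw [map_sub] at h1
      have := hminus i
      have := hkx1 i
      linarith
    have hkx : ∀ i, 1 - δ < (k i) (x i) := by
      intro i
      have h1 := hk2' i
      rw [map_sub] at h1
      have := hminus i
      have := hkz1 i
      linarith
    -- the two elements of the convex combination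
    have hF : (∑ i, lam i • h i) ∈ ccomb lam (fun i => wSlice (x i) (α i)) := by
      refine ⟨h, fun i => ⟨le_of_eq (hh1 i), ?_⟩, rfl⟩
      have := hix i
      have := hδA i
      linarith
    have hG : (∑ i, lam i • k i) ∈ ccomb lam (fun i => wSlice (x i) (α i)) := by
      refine ⟨k, fun i => ⟨le_of_eq (hk1 i), ?_⟩, rfl⟩
      have := hkx i
      have := hδA i
      linarith
    set F : StrongDual ℝ X := ∑ i, lam i • h i with hFdef
    set G : StrongDual ℝ X := ∑ i, lam i • k i with hGdef
    have happly : (F - G) z = ∑ i, lam i * ((h i) z - (k i) z) := by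
      rw [hFdef, hGdef]
      simp only [ContinuousLinearMap.sub_apply, ContinuousLinearMap.sum_apply,
        ContinuousLinearMap.smul_apply, smul_eq_mul]
      rw [← Finset.sum_sub_distrib]
      congr 1
      ext i
      ring
    have hbig : 2 - 2*δ < (F - G) z := by
      rw [happly]
      have hlt : ∑ i, lam i * (2 - 2*δ) < ∑ i, lam i * ((h i) z - (k i) z) := by
        apply Finset.sum_lt_sum_of_nonempty Finset.univ_nonempty
        intro i _
        apply mul_lt_mul_of_pos_left _ (hlam i)
        have := hiz i
        have := hkz i
        linarith
      have heq : ∑ i, lam i * (2 - 2*δ) = 2 - 2*δ := by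
        rw [← Finset.sum_mul, hsum, one_mul]
      linarith
    have hFGnorm : (F - G) z ≤ ‖F - G‖ := by
      have h1 := (F - G).le_opNorm z
      rw [Real.norm_eq_abs] at h1
      have h2 : ‖F - G‖ * ‖z‖ ≤ ‖F - G‖ :=
        mul_le_of_le_one_right (norm_nonneg _) hz1
      have h3 : (F - G) z ≤ |(F - G) z| := le_abs_self _
      linarith
    have hdist : dist F G ≤ Metric.diam (ccomb lam (fun i => wSlice (x i) (α i))) :=
      Metric.dist_le_diam_of_mem hbdd hF hG
    rw [dist_eq_norm] at hdist
    linarith
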